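/- Let ρ: G → GL(V) be an n-dimensional representation. For 0 < m < n, the exterior power ∧^m V is irreducible as a G-module if and only if ∧^{n−m} V is irreducible as a G-module. -/

import Mathlib

open Module ExteriorAlgebra

variable {k G V : Type*} [Field k] [AddCommGroup V] [Module k V] [Group G]

/-- A representation is `m`-thick (with `n = dim V`). -/
def IsMThick (ρ : G →* (V ≃ₗ[k] V)) (n m : ℕ) : Prop :=
  ∀ V₁ V₂ : Submodule k V,
    Module.finrank k V₁ = m → Module.finrank k V₂ = n - m →
    ∃ g : G, IsCompl (V₁.map (ρ g : V →ₗ[k] V)) V₂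

/-- Invariance of a subspace under the representation. -/
def RepInvariant (ρ : G →* (V ≃ₗ[k] V)) (W : Submodule k V) : Prop :=
  ∀ g : G, W.map (ρ g : V →ₗ[k] V) ≤ W

/-- Irreducibility of a representation. -/
def IsIrreducibleRep (ρ : G →* (V ≃ₗ[k] V)) : Prop :=
  Nontrivial V ∧ ∀ W : Submodule k V, RepInvariant ρ W → W = ⊥ ∨ W = ⊤

/-- The induced action on the exterior algebra. -/
noncomputable def extAction (ρ : G →* (V ≃ₗ[k] V)) (g : G) :
    ExteriorAlgebra k V →ₗ[k] ExteriorAlgebra k V :=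
  (ExteriorAlgebra.map (ρ g : V →ₗ[k] V)).toLinearMap

/-- A representation is `m`-dense if the induced representation on `⋀^m V` is irreducible. -/
def IsMDense (ρ : G →* (V ≃ₗ[k] V)) (m : ℕ) : Prop :=
  ∀ W : Submodule k (ExteriorAlgebra k V), W ≤ ⋀[k]^m V →
    (∀ g : G, W.map (extAction ρ g) ≤ W) → W = ⊥ ∨ W = ⋀[k]^m V

/-- A subspace of `⋀^m V` is realizable if it contains a nonzero decomposable vector. -/
def IsRealizable (k : Type*) [Field k] {V : Type*} [AddCommGroup V] [Module k V]
    (m : ℕ) (W : Submodule k (ExteriorAlgebra k V)) : Prop :=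
  ∃ v : Fin m → V, ExteriorAlgebra.ιMulti k m v ≠ 0 ∧ ExteriorAlgebra.ιMulti k m v ∈ W

/-- The perp of a subspace of `⋀^m V` inside `⋀^j V` with respect to the wedge pairing. -/
def wedgePerp (W : Submodule k (ExteriorAlgebra k V)) (j : ℕ) :
    Submodule k (ExteriorAlgebra k V) where
  carrier := {y | y ∈ ⋀[k]^j V ∧ ∀ x ∈ W, x * y = 0}
  add_mem' := by
    rintro a b ⟨ha, ha'⟩ ⟨hb, hb'⟩
    exact ⟨add_mem ha hb, fun x hx => by rw [mul_add, ha' x hx, hb' x hx, add_zero]⟩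
  zero_mem' := ⟨Submodule.zero_mem _, fun x _ => mul_zero x⟩
  smul_mem' := by
    rintro c a ⟨ha, ha'⟩
    exact ⟨Submodule.smul_mem _ c ha, fun x hx => by rw [mul_smul_comm, ha' x hx, smul_zero]⟩

namespace WedgeDualAux

lemma ιMulti_mul' {a c : ℕ} (v : Fin a → V) (w : Fin c → V) :
    ιMulti k a v * ιMulti k c w = ιMulti k (a + c) (Fin.append v w) := by
  rw [ιMulti_apply, ιMulti_apply, ιMulti_apply, ← List.prod_append, ← List.ofFn_fin_append]
  congr 1
  have : (fun i => ι k (Fin.append v w i))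
      = Fin.append (fun i => ι k (v i)) (fun i => ι k (w i)) := by
    funext i
    refine Fin.addCases (fun i => ?_) (fun i => ?_) i <;>
      simp [Fin.append_left, Fin.append_right]
  rw [this]

variable {n : ℕ} (b : Basis (Fin n) k V)

/-- Determinant-in-coordinates alternating functional attached to an ordered `j`-subset. -/
noncomputable def altF (S : Finset (Fin n)) {j : ℕ} (hS : S.card = j) : V [⋀^Fin j]→ₗ[k] k :=
  (Matrix.detRowAlternating).compLinearMap
    (LinearMap.pi fun i => b.coord (S.orderIsoOfFin hS i))

/-- The corresponding linear functional on the whole exterior algebra. -/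
noncomputable def Ffun (S : Finset (Fin n)) {j : ℕ} (hS : S.card = j) :
    ExteriorAlgebra k V →ₗ[k] k :=
  liftAlternating (Function.update (fun _ => 0) j (altF b S hS))

lemma Ffun_ιMulti (S : Finset (Fin n)) {j : ℕ} (hS : S.card = j) (v : Fin j → V) :
    Ffun b S hS (ιMulti k j v) =
      Matrix.det (Matrix.of fun i i' => b.coord (S.orderIsoOfFin hS i') (v i)) := by
  rw [Ffun, liftAlternating_apply_ιMulti, Function.update_self]
  rfl

lemma Ffun_self (S : Finset (Fin n)) {j : ℕ} (hS : S.card = j) :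
    Ffun b S hS (ιMulti k j fun i => b (S.orderIsoOfFin hS i)) = 1 := by
  rw [Ffun_ιMulti]
  have : (Matrix.of fun i i' => b.coord (S.orderIsoOfFin hS i') (b (S.orderIsoOfFin hS i)))
      = (1 : Matrix (Fin j) (Fin j) k) := by
    ext i i'
    simp only [Matrix.of_apply, Basis.coord_apply, Basis.repr_self, Matrix.one_apply]
    rw [Finsupp.single_apply]
    by_cases h : i = i'
    · simp [h]
    · have : ¬ ((S.orderIsoOfFin hS i : Fin n) = (S.orderIsoOfFin hS i' : Fin n)) := by
        simp only [← Subtype.ext_iff]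
        exact fun hh => h ((S.orderIsoOfFin hS).injective hh)
      simp [h, this]
  rw [this, Matrix.det_one]

lemma Ffun_ne (S T : Finset (Fin n)) {j : ℕ} (hS : S.card = j) (hT : T.card = j) (hne : T ≠ S) :
    Ffun b S hS (ιMulti k j fun i => b (T.orderIsoOfFin hT i)) = 0 := by
  rw [Ffun_ιMulti]
  have hsub : ¬ (T : Finset (Fin n)) ⊆ S := by
    intro hsub
    exact hne (Finset.eq_of_subset_of_card_le hsub (by omega))
  obtain ⟨x, hxT, hxS⟩ := Finset.not_subset.1 hsub
  obtain ⟨i0, hi0⟩ := (T.orderIsoOfFin hT).surjective ⟨x, hxT⟩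
  apply Matrix.det_eq_zero_of_row_eq_zero i0
  intro i'
  have hx' : (T.orderIsoOfFin hT i0 : Fin n) = x := by rw [hi0]
  simp only [Matrix.of_apply, Basis.coord_apply, Basis.repr_self, hx']
  rw [Finsupp.single_apply]
  have : ¬ (x = (S.orderIsoOfFin hS i' : Fin n)) := fun hh => hxS (hh ▸ (S.orderIsoOfFin hS i').2)
  exact if_neg this

lemma ιMulti_basis_not_inj {j : ℕ} {u : Fin j → Fin n} (hu : ¬ Function.Injective u) :
    ιMulti k j (fun i => b (u i)) = 0 := by
  simp only [Function.Injective, not_forall] at hu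
  obtain ⟨i, i', heq, hne⟩ := hu
  exact AlternatingMap.map_eq_zero_of_eq _ _ (by rw [heq]) hne

lemma ιMulti_basis_inj {j : ℕ} {u : Fin j → Fin n} (hu : Function.Injective u) :
    ∃ c : k, c ≠ 0 ∧ ιMulti k j (fun i => b (u i)) =
      c • ιMulti k j (fun i => b ((Finset.univ.image u).orderIsoOfFin
        (by rw [Finset.card_image_of_injective _ hu, Finset.card_univ, Fintype.card_fin]) i)) := by
  set S := Finset.univ.image u with hSdef
  have hS : S.card = j := by
    rw [hSdef, Finset.card_image_of_injective _ hu, Finset.card_univ, Fintype.card_fin]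
  have hmem : ∀ i, u i ∈ S := fun i => Finset.mem_image_of_mem u (Finset.mem_univ i)
  set g : Fin j → Fin j := fun i => (S.orderIsoOfFin hS).symm ⟨u i, hmem i⟩ with hg
  have hginj : Function.Injective g := by
    intro i i' h
    apply hu
    have := (S.orderIsoOfFin hS).symm.injective h
    exact congrArg Subtype.val this
  have hgbij : Function.Bijective g := (Finite.injective_iff_bijective).1 hginj
  let σ : Equiv.Perm (Fin j) := Equiv.ofBijective g hgbij
  have hcomp : (fun i => b (u i)) =
      (fun i => b ((S.orderIsoOfFin hS i : Fin n))) ∘ σ := by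
    funext i
    have : (S.orderIsoOfFin hS) (g i) = ⟨u i, hmem i⟩ := (S.orderIsoOfFin hS).apply_symm_apply _
    simp only [Function.comp, σ, Equiv.ofBijective_apply, this]
  refine ⟨((Equiv.Perm.sign σ : ℤ) : k), ?_, ?_⟩
  · rcases Int.units_eq_one_or (Equiv.Perm.sign σ) with h | h <;> simp [h]
  · rw [hcomp, AlternatingMap.map_perm]
    rcases Int.units_eq_one_or (Equiv.Perm.sign σ) with h | h <;> simp [h] <;> rfl

lemma fam_span (j : ℕ) :
    Submodule.span k (Set.range (ιMulti_family k j (fun i : Fin n => b i))) = ⋀[k]^j V := by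
  refine le_antisymm (Submodule.span_le.2 ?_) ?_
  · rintro _ ⟨S, rfl⟩
    exact ιMulti_range k j ⟨_, rfl⟩
  · rw [← ιMulti_span_fixedDegree]
    refine Submodule.span_le.2 ?_
    rintro _ ⟨v, rfl⟩
    have hv : v = fun i => ∑ t : Fin n, b.repr (v i) t • b t := by
      funext i; exact (b.sum_repr (v i)).symm
    have h2 : ιMulti k j v
        = (ιMulti k j (M := V)).toMultilinearMap fun i => ∑ t : Fin n, b.repr (v i) t • b t :=
      congrArg _ hv
    have h3 := MultilinearMap.map_sum (ιMulti k j (M := V)).toMultilinearMap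
      (g := fun i t => b.repr (v i) t • b t)
    rw [h2, h3]
    refine Submodule.sum_mem _ fun r _ => ?_
    rw [MultilinearMap.map_smul_univ]
    refine Submodule.smul_mem _ _ ?_
    by_cases hr : Function.Injective r
    · obtain ⟨c, -, hc⟩ := ιMulti_basis_inj b hr
      rw [show (ιMulti k j (M := V)).toMultilinearMap (fun i => b (r i))
          = ιMulti k j (fun i => b (r i)) from rfl, hc]
      refine Submodule.smul_mem _ _ (Submodule.subset_span ?_)
      exact ⟨⟨Finset.univ.image r, by
        rw [Set.powersetCard.mem_iff, Finset.card_image_of_injective _ hr, Finset.card_univ,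
          Fintype.card_fin]⟩, rfl⟩
    · rw [show (ιMulti k j (M := V)).toMultilinearMap (fun i => b (r i))
          = ιMulti k j (fun i => b (r i)) from rfl, ιMulti_basis_not_inj b hr]
      exact Submodule.zero_mem _

lemma fam_indep (j : ℕ) :
    LinearIndependent k (ιMulti_family k j (fun i : Fin n => b i)) := by
  rw [Fintype.linearIndependent_iff]
  intro c hc S
  have h := congrArg (Ffun b S.1 (Set.powersetCard.mem_iff.1 S.2)) hc
  rw [map_sum, map_zero] at h
  rw [Finset.sum_eq_single S] at h
  · rwa [map_smul, show ιMulti_family k j (fun i : Fin n => b i) S = ιMulti k j (fun i =>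
      b (S.1.orderIsoOfFin (Set.powersetCard.mem_iff.1 S.2) i)) from rfl, Ffun_self, smul_eq_mul, mul_one] at h
  · intro T _ hTS
    rw [map_smul, show ιMulti_family k j (fun i : Fin n => b i) T = ιMulti k j (fun i =>
      b (T.1.orderIsoOfFin (Set.powersetCard.mem_iff.1 T.2) i)) from rfl,
      Ffun_ne b S.1 T.1 (Set.powersetCard.mem_iff.1 S.2) (Set.powersetCard.mem_iff.1 T.2) (fun hh => hTS (Subtype.ext hh)), smul_eq_mul,
      mul_zero]
  · intro h'; exact absurd (Finset.mem_univ S) h'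

/-- The subset-indexed family, as elements of the `j`-th exterior power. -/
noncomputable def fam' (j : ℕ) (S : {S : Finset (Fin n) // S.card = j}) : ⋀[k]^j V :=
  ⟨ιMulti_family k j (fun i : Fin n => b i) S,
    (fam_span b j) ▸ Submodule.subset_span ⟨S, rfl⟩⟩

noncomputable def powBasis (j : ℕ) :
    Basis {S : Finset (Fin n) // S.card = j} k (⋀[k]^j V) := by
  refine Basis.mk (v := fam' b j) ?_ ?_
  · have : LinearIndependent k ((⋀[k]^j V).subtype ∘ fam' b j) := fam_indep b j
    exact this.of_comp _
  · have himg : (⋀[k]^j V).subtype '' (Set.range (fam' b j))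
        = Set.range (ιMulti_family k j (fun i : Fin n => b i)) := by
      rw [← Set.range_comp]; rfl
    have hmap : Submodule.map (⋀[k]^j V).subtype (Submodule.span k (Set.range (fam' b j)))
        = Submodule.map (⋀[k]^j V).subtype ⊤ := by
      rw [Submodule.map_span, himg, fam_span, Submodule.map_top, Submodule.range_subtype]
    exact (Submodule.map_injective_of_injective (Submodule.injective_subtype _) hmap).ge

include b in
lemma pow_finiteDimensional (j : ℕ) : FiniteDimensional k (⋀[k]^j V) :=
  Module.Finite.of_basis (powBasis b j)

include b in
lemma finrank_pow (j : ℕ) : finrank k (⋀[k]^j V) = n.choose j := by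
  rw [finrank_eq_card_basis (powBasis b j), Fintype.card_finset_len, Fintype.card_fin]



lemma comp_append {α β : Type*} {a c : ℕ} (f : α → β) (v : Fin a → α) (w : Fin c → α) :
    Fin.append (f ∘ v) (f ∘ w) = f ∘ Fin.append v w := by
  funext i
  refine Fin.addCases (fun i => ?_) (fun i => ?_) i <;>
    simp [Fin.append_left, Fin.append_right]

lemma append_inj {α : Type*} {a c : ℕ} {v : Fin a → α} {w : Fin c → α}
    (hv : Function.Injective v) (hw : Function.Injective w)
    (hd : ∀ i i', v i ≠ w i') : Function.Injective (Fin.append v w) := by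
  intro x y
  refine Fin.addCases (fun i => Fin.addCases (fun i' h => ?_) (fun i' h => ?_) y)
    (fun i => Fin.addCases (fun i' h => ?_) (fun i' h => ?_) y) x
  · rw [Fin.append_left, Fin.append_left] at h
    exact congrArg _ (hv h)
  · rw [Fin.append_left, Fin.append_right] at h
    exact absurd h (hd _ _)
  · rw [Fin.append_right, Fin.append_left] at h
    exact absurd h.symm (hd _ _)
  · rw [Fin.append_right, Fin.append_right] at h
    exact congrArg _ (hw h)



lemma card_univ_fin : (Finset.univ : Finset (Fin n)).card = n := by
  rw [Finset.card_univ, Fintype.card_fin]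

/-- The top wedge of the basis. -/
noncomputable def topWedge : ExteriorAlgebra k V :=
  ιMulti_family k n (fun i : Fin n => b i) ⟨Finset.univ, card_univ_fin⟩

include b in
lemma top_eq_span : (⋀[k]^n V : Submodule k (ExteriorAlgebra k V))
    = Submodule.span k {topWedge b} := by
  rw [← fam_span b n]
  refine le_antisymm (Submodule.span_le.2 ?_) (Submodule.span_le.2 ?_)
  · rintro _ ⟨⟨S, hS⟩, rfl⟩
    have : S = Finset.univ := Finset.eq_univ_of_card S (by rw [Fintype.card_fin]; exact hS)
    subst this
    exact Submodule.subset_span rfl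
  · rintro _ rfl
    exact Submodule.subset_span ⟨⟨Finset.univ, card_univ_fin⟩, rfl⟩

lemma eval_topWedge : Ffun b Finset.univ card_univ_fin (topWedge b) = 1 :=
  Ffun_self b Finset.univ card_univ_fin

lemma topWedge_ne_zero : topWedge b ≠ 0 := fun h => by
  have := eval_topWedge b
  rw [h, map_zero] at this
  exact (one_ne_zero (α := k)) this.symm

lemma eq_zero_of_top_degree {x : ExteriorAlgebra k V} (hx : x ∈ ⋀[k]^n V)
    (hfx : Ffun b Finset.univ card_univ_fin x = 0) : x = 0 := by
  rw [top_eq_span b, Submodule.mem_span_singleton] at hx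
  obtain ⟨c, rfl⟩ := hx
  rw [map_smul, eval_topWedge, smul_eq_mul, mul_one] at hfx
  rw [hfx, zero_smul]

include b in
/-- Nondegeneracy of the wedge pairing. -/
lemma wedge_nondeg {a c : ℕ} (hac : a + c = n) {x : ExteriorAlgebra k V}
    (hx : x ∈ ⋀[k]^a V) (h : ∀ y ∈ ⋀[k]^c V, x * y = 0) : x = 0 := by
  subst hac
  rw [← fam_span b a] at hx
  rw [Finsupp.mem_span_range_iff_exists_finsupp] at hx
  obtain ⟨cf, rfl⟩ := hx
  suffices hcf : ∀ S, cf S = 0 by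
    simp only [Finsupp.sum]
    refine Finset.sum_eq_zero fun S _ => by rw [hcf, zero_smul]
  intro S
  have hScard : (S.1ᶜ : Finset (Fin (a + c))).card = c := by
    rw [Finset.card_compl, Fintype.card_fin, Set.powersetCard.mem_iff.1 S.2]; omega
  set uS : Fin a → Fin (a + c) := fun i => (S.1.orderIsoOfFin S.2 i : Fin (a + c)) with huS
  set uC : Fin c → Fin (a + c) := fun i => ((S.1ᶜ).orderIsoOfFin hScard i : Fin (a + c)) with huC
  have key := h (ιMulti k c fun i => b (uC i))
    (by rw [← fam_span b c]; exact Submodule.subset_span ⟨⟨S.1ᶜ, hScard⟩, rfl⟩)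
  rw [Finsupp.sum, Finset.sum_mul] at key
  have hterm : ∀ T : Set.powersetCard (Fin (a + c)) a, T ∈ cf.support → T ≠ S →
      (cf T • ιMulti_family k a (fun i : Fin (a + c) => b i) T)
        * (ιMulti k c fun i => b (uC i)) = 0 := by
    intro T _ hTS
    set uT : Fin a → Fin (a + c) := fun i => (T.1.orderIsoOfFin T.2 i : Fin (a + c)) with huT
    rw [smul_mul_assoc]
    have : (ιMulti k a fun i => b (uT i)) * (ιMulti k c fun i => b (uC i)) = 0 := by
      rw [show (fun i => b (uT i)) = b ∘ uT from rfl, show (fun i => b (uC i)) = b ∘ uC from rfl,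
        ιMulti_mul', comp_append]
      have hni : ¬ Function.Injective (Fin.append uT uC) := by
        intro hinj
        have hsub : ¬ T.1 ⊆ S.1 := fun hsub =>
          hTS (Subtype.ext (Finset.eq_of_subset_of_card_le hsub (by rw [Set.powersetCard.mem_iff.1 S.2, Set.powersetCard.mem_iff.1 T.2])))
        obtain ⟨t, htT, htS⟩ := Finset.not_subset.1 hsub
        obtain ⟨i, hi⟩ := (T.1.orderIsoOfFin T.2).surjective ⟨t, htT⟩
        obtain ⟨i', hi'⟩ := ((S.1ᶜ).orderIsoOfFin hScard).surjective ⟨t, Finset.mem_compl.2 htS⟩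
        have : Fin.append uT uC (Fin.castAdd c i) = Fin.append uT uC (Fin.natAdd a i') := by
          simp only [Fin.append_left, Fin.append_right, huT, huC]
          rw [hi, hi']
        have := hinj this
        have hlt : (Fin.castAdd c i : ℕ) < a := i.2
        have hge : a ≤ (Fin.natAdd a i' : ℕ) := Nat.le_add_right a i'
        rw [this] at hlt
        omega
      exact ιMulti_basis_not_inj b hni
    rw [show ιMulti_family k a (fun i : Fin (a + c) => b i) T = ιMulti k a (fun i => b (uT i)) from rfl,
      this, smul_zero]
  by_cases hSsupp : S ∈ cf.support
  · rw [Finset.sum_eq_single_of_mem S hSsupp (fun T hT hTS => hterm T hT hTS)] at key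
    rw [smul_mul_assoc] at key
    have hprod : (ιMulti_family k a (fun i : Fin (a + c) => b i) S)
        * (ιMulti k c fun i => b (uC i)) ≠ 0 := by
      have h1 : (ιMulti_family k a (fun i : Fin (a + c) => b i) S)
          = ιMulti k a (fun i => b (uS i)) := rfl
      rw [h1, show (fun i => b (uS i)) = b ∘ uS from rfl,
        show (fun i => b (uC i)) = b ∘ uC from rfl, ιMulti_mul', comp_append]
      have hinj : Function.Injective (Fin.append uS uC) := by
        refine append_inj ?_ ?_ ?_
        · intro i i' h
          exact (S.1.orderIsoOfFin S.2).injective (Subtype.ext h)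
        · intro i i' h
          exact ((S.1ᶜ).orderIsoOfFin hScard).injective (Subtype.ext h)
        · intro i i' h
          have h1 : uS i ∈ S.1 := (S.1.orderIsoOfFin S.2 i).2
          have h2 : uC i' ∈ S.1ᶜ := ((S.1ᶜ).orderIsoOfFin hScard i').2
          rw [h] at h1
          exact (Finset.mem_compl.1 h2) h1
      obtain ⟨c', hc', hc2⟩ := ιMulti_basis_inj b hinj
      rw [show (ιMulti k (a + c)) (⇑b ∘ Fin.append uS uC)
        = (ιMulti k (a + c)) (fun i => b (Fin.append uS uC i)) from rfl, hc2]
      have hcard2 : (Finset.univ.image (Fin.append uS uC)).card = a + c := by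
        rw [Finset.card_image_of_injective _ hinj, Finset.card_univ, Fintype.card_fin]
      have hne := (fam_indep b (a + c)).ne_zero
        ⟨Finset.univ.image (Fin.append uS uC), hcard2⟩
      intro h0
      rcases smul_eq_zero.1 h0 with h | h
      · exact hc' h
      · exact hne h
    rcases smul_eq_zero.1 key with h | h
    · exact h
    · exact absurd h hprod
  · exact Finsupp.notMem_support_iff.1 hSsupp

end WedgeDualAux

section Main
open WedgeDualAux

lemma extAction_mul (ρ : G →* (V ≃ₗ[k] V)) (g : G) (x y : ExteriorAlgebra k V) :
    extAction ρ g (x * y) = extAction ρ g x * extAction ρ g y :=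
  map_mul (ExteriorAlgebra.map ((ρ g : V →ₗ[k] V))) x y

lemma extAction_cancel (ρ : G →* (V ≃ₗ[k] V)) (g : G) (x : ExteriorAlgebra k V) :
    extAction ρ g (extAction ρ g⁻¹ x) = x := by
  have h1 : (ρ g : V →ₗ[k] V) ∘ₗ (ρ g⁻¹ : V →ₗ[k] V) = LinearMap.id := by
    ext v
    have : ρ g (ρ g⁻¹ v) = (ρ g * ρ g⁻¹) v := rfl
    simp only [LinearMap.comp_apply, LinearMap.id_apply, LinearEquiv.coe_coe]
    rw [this, ← map_mul, mul_inv_cancel, map_one]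
    rfl
  have h2 := ExteriorAlgebra.map_comp_map ((ρ g⁻¹ : V →ₗ[k] V)) ((ρ g : V →ₗ[k] V))
  rw [h1, ExteriorAlgebra.map_id] at h2
  calc extAction ρ g (extAction ρ g⁻¹ x)
      = ((ExteriorAlgebra.map ((ρ g : V →ₗ[k] V))).comp
          (ExteriorAlgebra.map ((ρ g⁻¹ : V →ₗ[k] V)))) x := rfl
    _ = (AlgHom.id k (ExteriorAlgebra k V)) x := by rw [h2]
    _ = x := rfl

lemma extAction_pow_le (ρ : G →* (V ≃ₗ[k] V)) (g : G) (j : ℕ) :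
    Submodule.map (extAction ρ g) (⋀[k]^j V) ≤ ⋀[k]^j V := by
  rw [← ExteriorAlgebra.ιMulti_span_fixedDegree, Submodule.map_span, Submodule.span_le]
  rintro _ ⟨_, ⟨v, rfl⟩, rfl⟩
  have : extAction ρ g (ιMulti k j v) = ιMulti k j ((ρ g : V →ₗ[k] V) ∘ v) :=
    ExteriorAlgebra.map_apply_ιMulti _ _
  rw [this]
  exact Submodule.subset_span ⟨_, rfl⟩

variable [FiniteDimensional k V]

lemma isMDense_dir {n a c : ℕ} (hn : finrank k V = n) (hac : a + c = n)
    (ρ : G →* (V ≃ₗ[k] V)) (hd : IsMDense ρ a) : IsMDense ρ c := by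
  intro W hW hWinv
  let b : Basis (Fin n) k V := Module.finBasisOfFinrankEq k V hn
  set P := wedgePerp W a with hPdef
  have hPle : P ≤ ⋀[k]^a V := fun y hy => hy.1
  have hPinv : ∀ g : G, P.map (extAction ρ g) ≤ P := by
    rintro g _ ⟨y, ⟨hy1, hy2⟩, rfl⟩
    refine ⟨extAction_pow_le ρ g a ⟨y, hy1, rfl⟩, fun x hx => ?_⟩
    have hx' : extAction ρ g⁻¹ x ∈ W := hWinv g⁻¹ ⟨x, hx, rfl⟩
    have hstep : x * extAction ρ g y = extAction ρ g (extAction ρ g⁻¹ x * y) := by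
      rw [extAction_mul, extAction_cancel]
    rw [hstep, hy2 _ hx', map_zero]
  rcases hd P hPle hPinv with hP | hP
  · -- perp is zero: W is everything
    right
    haveI : FiniteDimensional k (⋀[k]^a V : Submodule k (ExteriorAlgebra k V)) :=
      pow_finiteDimensional b a
    haveI : FiniteDimensional k (⋀[k]^c V : Submodule k (ExteriorAlgebra k V)) :=
      pow_finiteDimensional b c
    haveI : FiniteDimensional k W := Submodule.finiteDimensional_of_le hW
    set f : ExteriorAlgebra k V →ₗ[k] k := Ffun b Finset.univ card_univ_fin with hf
    set Φ : (⋀[k]^a V : Submodule k (ExteriorAlgebra k V)) →ₗ[k] Module.Dual k W :=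
      (((LinearMap.mul k (ExteriorAlgebra k V)).compr₂ f).flip).domRestrict₁₂
        (⋀[k]^a V) W with hΦ
    have hΦinj : Function.Injective Φ := by
      rw [← LinearMap.ker_eq_bot, Submodule.eq_bot_iff]
      rintro ⟨y, hy⟩ hker
      have hyP : y ∈ P := by
        refine ⟨hy, fun x hx => ?_⟩
        have hmem : x * y ∈ ⋀[k]^n V := by
          have := SetLike.mul_mem_graded (hW hx) hy
          rwa [show c + a = n by omega] at this
        refine eq_zero_of_top_degree b hmem ?_
        have := congrFun (congrArg (fun (F : Module.Dual k W) => F.toFun) hker) ⟨x, hx⟩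
        exact this
      rw [hP] at hyP
      simpa using hyP
    have h1 : finrank k (⋀[k]^a V : Submodule k (ExteriorAlgebra k V))
        ≤ finrank k W := by
      have := LinearMap.finrank_le_finrank_of_injective hΦinj
      rwa [Subspace.dual_finrank_eq] at this
    have h2 : finrank k W ≤ finrank k (⋀[k]^c V : Submodule k (ExteriorAlgebra k V)) :=
      Submodule.finrank_mono hW
    have h3 : finrank k (⋀[k]^a V : Submodule k (ExteriorAlgebra k V))
        = finrank k (⋀[k]^c V : Submodule k (ExteriorAlgebra k V)) := by
      rw [finrank_pow b a, finrank_pow b c]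
      have : n - a = c := by omega
      rw [← this, Nat.choose_symm (by omega)]
    exact Submodule.eq_of_le_of_finrank_eq hW (by omega)
  · -- perp is everything: W is zero
    left
    rw [Submodule.eq_bot_iff]
    intro x hx
    refine wedge_nondeg b (show c + a = n by omega) (hW hx) fun y hy => ?_
    have hyP : y ∈ P := hP.symm ▸ hy
    exact hyP.2 x hx

end Main

/-- `⋀^m V` is irreducible iff `⋀^(n-m) V` is irreducible. -/
theorem mdense_iff_dense_compl [FiniteDimensional k V] {n m : ℕ}
    (hn : Module.finrank k V = n) (hm0 : 0 < m) (hmn : m < n)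
    (ρ : G →* (V ≃ₗ[k] V)) :
    IsMDense ρ m ↔ IsMDense ρ (n - m) :=
  ⟨fun h => isMDense_dir hn (show m + (n - m) = n by omega) ρ h,
   fun h => isMDense_dir hn (show (n - m) + m = n by omega) ρ h⟩
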